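/- There exists a constant C₂ > 0, depending only on N, p and η, such that for every R > 0 and every (x,t) ∈ ℝ^N × [0,∞) with 1 + |x|² + ∫₀^t Φ(σ) dσ ≤ R, one has |Δ_x ψ_R(x,t)| ≤ C₂ R^{−1} [ψ_R^*(x,t)]^{1/p}. -/

import Mathlib

open MeasureTheory Filter

lemma aux_sd (N : ℕ) (η : ℝ → ℝ) (hη : ContDiff ℝ 2 η) (q : ℝ) (hq1 : 1 ≤ q)
    (hq2 : 1 ≤ q - 1) (R c : ℝ) (x : EuclideanSpace ℝ (Fin N)) (i : Fin N) :
    fderiv ℝ (fun y => fderiv ℝ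
        (fun z : EuclideanSpace ℝ (Fin N) => η (R⁻¹ * (1 + ‖z‖ ^ 2 + c)) ^ q) y
        (EuclideanSpace.single i (1:ℝ))) x (EuclideanSpace.single i (1:ℝ))
      = 2 * R⁻¹ * (deriv η (R⁻¹ * (1 + ‖x‖ ^ 2 + c)) * q * η (R⁻¹ * (1 + ‖x‖ ^ 2 + c)) ^ (q-1))
        + 4 * R⁻¹ * R⁻¹ * (x i) ^ 2 *
          (deriv (deriv η) (R⁻¹ * (1 + ‖x‖ ^ 2 + c)) * q * η (R⁻¹ * (1 + ‖x‖ ^ 2 + c)) ^ (q-1)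
            + deriv η (R⁻¹ * (1 + ‖x‖ ^ 2 + c)) * q *
              (deriv η (R⁻¹ * (1 + ‖x‖ ^ 2 + c)) * (q-1) * η (R⁻¹ * (1 + ‖x‖ ^ 2 + c)) ^ (q-1-1))) := by
  have hηd : Differentiable ℝ η := hη.differentiable (by norm_num)
  have h2 : ContDiff ℝ ((1:ℕ) + 1) η := by exact_mod_cast hη
  have hη1d : ContDiff ℝ 1 (deriv η) := (contDiff_succ_iff_deriv.mp h2).2.2
  have hdηd : Differentiable ℝ (deriv η) := hη1d.differentiable (by norm_num)
  -- derivative of the inner scalar function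
  have hsf : ∀ z : EuclideanSpace ℝ (Fin N),
      HasFDerivAt (fun z : EuclideanSpace ℝ (Fin N) => R⁻¹ * (1 + ‖z‖ ^ 2 + c))
        (R⁻¹ • ((2:ℕ) • (innerSL ℝ z))) z := fun z =>
    ((((hasStrictFDerivAt_norm_sq z).hasFDerivAt.const_add 1).add_const c).const_mul R⁻¹)
  -- first derivative
  have hF : ∀ z : EuclideanSpace ℝ (Fin N),
      HasFDerivAt (fun z : EuclideanSpace ℝ (Fin N) => η (R⁻¹ * (1 + ‖z‖ ^ 2 + c)) ^ q)
        ((deriv η (R⁻¹ * (1 + ‖z‖ ^ 2 + c)) * q * η (R⁻¹ * (1 + ‖z‖ ^ 2 + c)) ^ (q-1)) •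
          (R⁻¹ • ((2:ℕ) • (innerSL ℝ z)))) z := fun z =>
    ((hηd _).hasDerivAt.rpow_const (Or.inr hq1)).comp_hasFDerivAt z (hsf z)
  have hfd : (fun y : EuclideanSpace ℝ (Fin N) =>
      fderiv ℝ (fun z : EuclideanSpace ℝ (Fin N) => η (R⁻¹ * (1 + ‖z‖ ^ 2 + c)) ^ q) y
        (EuclideanSpace.single i (1:ℝ)))
      = fun y => (deriv η (R⁻¹ * (1 + ‖y‖ ^ 2 + c)) * q * η (R⁻¹ * (1 + ‖y‖ ^ 2 + c)) ^ (q-1)) *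
          ((2 * R⁻¹) * y i) := by
    funext y
    rw [(hF y).fderiv]
    simp only [ContinuousLinearMap.smul_apply, innerSL_apply_apply, EuclideanSpace.inner_single_right,
      starRingEnd_apply, star_trivial, smul_eq_mul, nsmul_eq_mul, Nat.cast_ofNat]
    ring
  rw [hfd]
  -- second derivative
  have hA : HasFDerivAt (fun y : EuclideanSpace ℝ (Fin N) =>
      deriv η (R⁻¹ * (1 + ‖y‖ ^ 2 + c)) * q * η (R⁻¹ * (1 + ‖y‖ ^ 2 + c)) ^ (q-1))
      ((deriv (deriv η) (R⁻¹ * (1 + ‖x‖ ^ 2 + c)) * q * η (R⁻¹ * (1 + ‖x‖ ^ 2 + c)) ^ (q-1)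
        + deriv η (R⁻¹ * (1 + ‖x‖ ^ 2 + c)) * q *
          (deriv η (R⁻¹ * (1 + ‖x‖ ^ 2 + c)) * (q-1) * η (R⁻¹ * (1 + ‖x‖ ^ 2 + c)) ^ (q-1-1))) •
        (R⁻¹ • ((2:ℕ) • (innerSL ℝ x)))) x := by
    have h1 := (((hdηd (R⁻¹ * (1 + ‖x‖ ^ 2 + c))).hasDerivAt.mul_const q).mul
      (((hηd (R⁻¹ * (1 + ‖x‖ ^ 2 + c))).hasDerivAt).rpow_const (Or.inr hq2)))
    exact h1.comp_hasFDerivAt x (hsf x)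
  have hB : HasFDerivAt (fun y : EuclideanSpace ℝ (Fin N) => (2 * R⁻¹) * y i)
      ((2 * R⁻¹) • (EuclideanSpace.proj (𝕜 := ℝ) i)) x :=
    ((EuclideanSpace.proj (𝕜 := ℝ) i).hasFDerivAt).const_mul (2 * R⁻¹)
  have hmul := hA.mul hB
  erw [hmul.fderiv]
  simp only [ContinuousLinearMap.add_apply, ContinuousLinearMap.smul_apply, innerSL_apply_apply,
    EuclideanSpace.inner_single_right, starRingEnd_apply, star_trivial, smul_eq_mul,
    nsmul_eq_mul, Nat.cast_ofNat, PiLp.proj_apply, EuclideanSpace.single_apply, if_pos rfl, if_true]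
  ring


set_option maxHeartbeats 1000000 in
lemma aux_bound (p p' M1 M2 R nr xsq : ℝ) (η ηstar : ℝ → ℝ) (hp : 1 < p)
    (hp' : p' = p / (p - 1))
    (hη01 : ∀ s, 0 ≤ η s ∧ η s ≤ 1) (hη1 : ∀ s ≤ (1/2 : ℝ), η s = 1)
    (hηstar : ∀ s, ηstar s = if s < (1/2 : ℝ) then 0 else η s)
    (s₀ : ℝ) (hM1s : |deriv η s₀| ≤ M1) (hM2s : |deriv (deriv η) s₀| ≤ M2)
    (hM1n : 0 ≤ M1) (hM2n : 0 ≤ M2)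
    (hR : 0 < R) (hnr : 0 ≤ nr) (hxsq : 0 ≤ xsq) (hxR : xsq ≤ R) :
    |2 * R⁻¹ * (deriv η s₀ * (2*p') * η s₀ ^ (2*p'-1)) * nr
      + 4 * R⁻¹ * R⁻¹ * xsq *
        (deriv (deriv η) s₀ * (2*p') * η s₀ ^ (2*p'-1)
          + deriv η s₀ * (2*p') * (deriv η s₀ * (2*p'-1) * η s₀ ^ (2*p'-1-1)))|
      ≤ (1 + 2*nr*(2*p'*M1) + 4*(2*p'*M2 + 2*p'*(2*p'-1)*M1^2)) * R⁻¹ *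
        (ηstar s₀ ^ (2*p')) ^ (1/p) := by
  have hp0 : (0:ℝ) < p - 1 := by linarith
  have hp'1 : 1 < p' := by rw [hp', lt_div_iff₀ hp0]; linarith
  have hRi : (0:ℝ) < R⁻¹ := inv_pos.2 hR
  rcases lt_or_ge s₀ (1/2) with hlt | hge
  · have hd1' : ∀ u < (1/2:ℝ), deriv η u = 0 := by
      intro u hu
      have hev : η =ᶠ[nhds u] fun _ => (1:ℝ) :=
        Filter.eventuallyEq_of_mem (Iio_mem_nhds hu) (fun v hv => hη1 v (le_of_lt hv))
      rw [hev.deriv_eq, deriv_const]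
    have hd1 : deriv η s₀ = 0 := hd1' s₀ hlt
    have hd2 : deriv (deriv η) s₀ = 0 := by
      have hev : deriv η =ᶠ[nhds s₀] fun _ => (0:ℝ) :=
        Filter.eventuallyEq_of_mem (Iio_mem_nhds hlt) (fun v hv => hd1' v hv)
      rw [hev.deriv_eq, deriv_const]
    rw [hd1, hd2, hηstar s₀, if_pos hlt,
      Real.zero_rpow (ne_of_gt (by linarith : (0:ℝ) < 2*p')),
      Real.zero_rpow (one_div_ne_zero (by linarith : p ≠ 0)), mul_zero]
    norm_num
  · have h0 := (hη01 s₀).1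
    have h1 := (hη01 s₀).2
    have he2n : (0:ℝ) ≤ η s₀ ^ (2*p'-1-1) := Real.rpow_nonneg h0 _
    have he1n : (0:ℝ) ≤ η s₀ ^ (2*p'-1) := Real.rpow_nonneg h0 _
    have hE1 : η s₀ ^ (2*p'-1) ≤ η s₀ ^ (2*p'-1-1) := by
      rcases eq_or_lt_of_le h0 with h00 | h00
      · rw [← h00, Real.zero_rpow (ne_of_gt (by linarith : (0:ℝ) < 2*p'-1)),
          Real.zero_rpow (ne_of_gt (by linarith : (0:ℝ) < 2*p'-1-1))]
      · exact Real.rpow_le_rpow_of_exponent_ge h00 h1 (by linarith)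
    have hrhseq : (ηstar s₀ ^ (2*p')) ^ ((1:ℝ)/p) = η s₀ ^ (2*p'-1-1) := by
      rw [hηstar s₀, if_neg (not_lt.2 hge), ← Real.rpow_mul h0]
      congr 1
      rw [hp']
      field_simp
      ring
    rw [hrhseq]
    have ha : |2*p'| = 2*p' := abs_of_pos (by linarith)
    have hb : |2*p'-1| = 2*p'-1 := abs_of_pos (by linarith)
    have hc : |η s₀ ^ (2*p'-1-1)| = η s₀ ^ (2*p'-1-1) := abs_of_nonneg he2n
    have hd : |η s₀ ^ (2*p'-1)| = η s₀ ^ (2*p'-1) := abs_of_nonneg he1n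
    have habs1 : |deriv η s₀ * (2*p') * η s₀ ^ (2*p'-1)| ≤ 2*p'*M1*(η s₀ ^ (2*p'-1-1)) := by
      simp only [abs_mul, ha, hd]
      nlinarith [abs_nonneg (deriv η s₀), mul_le_mul hM1s hE1 he1n hM1n]
    have habs2 : |deriv (deriv η) s₀ * (2*p') * η s₀ ^ (2*p'-1)|
        ≤ 2*p'*M2*(η s₀ ^ (2*p'-1-1)) := by
      simp only [abs_mul, ha, hd]
      nlinarith [abs_nonneg (deriv (deriv η) s₀), mul_le_mul hM2s hE1 he1n hM2n]
    have habs3 : |deriv η s₀ * (2*p') * (deriv η s₀ * (2*p'-1) * η s₀ ^ (2*p'-1-1))|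
        ≤ 2*p'*(2*p'-1)*M1^2*(η s₀ ^ (2*p'-1-1)) := by
      simp only [abs_mul, ha, hb, hc]
      have hq := mul_le_mul_of_nonneg_left
        (mul_le_mul_of_nonneg_right (mul_le_mul hM1s hM1s (abs_nonneg _) hM1n) he2n)
        (le_of_lt (by nlinarith : (0:ℝ) < 2*p'*(2*p'-1)))
      nlinarith [hq]
    have hT1 : |2 * R⁻¹ * (deriv η s₀ * (2*p') * η s₀ ^ (2*p'-1)) * nr|
        ≤ 2 * R⁻¹ * (2*p'*M1*(η s₀ ^ (2*p'-1-1))) * nr := by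
      have h2Ri : (0:ℝ) < 2*R⁻¹ := by linarith
      rw [abs_mul, abs_of_nonneg hnr, abs_mul, abs_of_pos h2Ri]
      exact mul_le_mul_of_nonneg_right
        (mul_le_mul_of_nonneg_left habs1 h2Ri.le) hnr
    have hA2 : |deriv (deriv η) s₀ * (2*p') * η s₀ ^ (2*p'-1)
          + deriv η s₀ * (2*p') * (deriv η s₀ * (2*p'-1) * η s₀ ^ (2*p'-1-1))|
        ≤ 2*p'*M2*(η s₀ ^ (2*p'-1-1)) + 2*p'*(2*p'-1)*M1^2*(η s₀ ^ (2*p'-1-1)) :=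
      le_trans (abs_add_le _ _) (add_le_add habs2 habs3)
    have hBn : (0:ℝ) ≤ 2*p'*M2*(η s₀ ^ (2*p'-1-1)) + 2*p'*(2*p'-1)*M1^2*(η s₀ ^ (2*p'-1-1)) := by
      have u1 : (0:ℝ) ≤ 2*p'*M2*(η s₀ ^ (2*p'-1-1)) :=
        mul_nonneg (mul_nonneg (by linarith) hM2n) he2n
      have u2 : (0:ℝ) ≤ 2*p'*(2*p'-1)*M1^2*(η s₀ ^ (2*p'-1-1)) :=
        mul_nonneg (mul_nonneg (mul_nonneg (by linarith) (by linarith)) (sq_nonneg M1)) he2n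
      linarith
    have h2' : 4 * R⁻¹ * R⁻¹ * xsq ≤ 4 * R⁻¹ := by
      have h3 : R⁻¹ * xsq ≤ R⁻¹ * R := mul_le_mul_of_nonneg_left hxR hRi.le
      rw [inv_mul_cancel₀ (ne_of_gt hR)] at h3
      linarith [mul_le_mul_of_nonneg_left h3 (show (0:ℝ) ≤ 4*R⁻¹ by linarith)]
    have hT2 : |4 * R⁻¹ * R⁻¹ * xsq * (deriv (deriv η) s₀ * (2*p') * η s₀ ^ (2*p'-1)
          + deriv η s₀ * (2*p') * (deriv η s₀ * (2*p'-1) * η s₀ ^ (2*p'-1-1)))|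
        ≤ 4 * R⁻¹ * (2*p'*M2*(η s₀ ^ (2*p'-1-1)) + 2*p'*(2*p'-1)*M1^2*(η s₀ ^ (2*p'-1-1))) := by
      have h4n : (0:ℝ) ≤ 4 * R⁻¹ * R⁻¹ * xsq :=
        mul_nonneg (by nlinarith : (0:ℝ) ≤ 4 * R⁻¹ * R⁻¹) hxsq
      rw [abs_mul, abs_of_nonneg h4n]
      exact le_trans (mul_le_mul_of_nonneg_left hA2 h4n)
        (mul_le_mul_of_nonneg_right h2' hBn)
    have htri := le_trans (abs_add_le _ _) (add_le_add hT1 hT2)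
    refine le_trans htri ?_
    have hkey : (1 + 2*nr*(2*p'*M1) + 4*(2*p'*M2 + 2*p'*(2*p'-1)*M1^2)) * R⁻¹ *
          (η s₀ ^ (2*p'-1-1))
        - (2 * R⁻¹ * (2*p'*M1*(η s₀ ^ (2*p'-1-1))) * nr
          + 4 * R⁻¹ * (2*p'*M2*(η s₀ ^ (2*p'-1-1)) + 2*p'*(2*p'-1)*M1^2*(η s₀ ^ (2*p'-1-1))))
        = R⁻¹ * (η s₀ ^ (2*p'-1-1)) := by ring
    linarith [hkey, mul_nonneg hRi.le he2n]

/-- Spatial Laplacian estimate for the rescaled cut-off function `ψ_R`: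
there exists `C₂ > 0` (depending only on `N`, `p` and `η`) such that for every
`R > 0` and `(x,t) ∈ ℝ^N × [0,∞)` with `1 + |x|² + ∫₀^t Φ ≤ R`,
`|Δ_x ψ_R(x,t)| ≤ C₂ R⁻¹ [ψ_R^*(x,t)]^{1/p}`. The Laplacian is written as the
sum of the second derivatives in the coordinate directions. -/
theorem stmt_12 (N : ℕ) (hN : 1 ≤ N) (b : ℝ → ℝ) (hb : ContDiff ℝ 1 b)
    (hbpos : ∀ t ≥ (0 : ℝ), 0 < b t)
    (hlimsup : Filter.limsup (fun t => |deriv b t| / (b t) ^ 2) Filter.atTop < 1)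
    (Φ : ℝ → ℝ)
    (hΦ : ∀ t, Φ t = ∫ s in Set.Ioi t, Real.exp (-∫ σ in t..s, b σ))
    (p p' : ℝ) (hp : 1 < p) (hp' : p' = p / (p - 1))
    (η ηstar : ℝ → ℝ) (hη : ContDiff ℝ 2 η)
    (hη01 : ∀ s, 0 ≤ η s ∧ η s ≤ 1)
    (hη1 : ∀ s ≤ (1/2 : ℝ), η s = 1)
    (hηmono : AntitoneOn η (Set.Ioo (1/2 : ℝ) 1))
    (hη0 : ∀ s ≥ (1 : ℝ), η s = 0)
    (hηstar : ∀ s, ηstar s = if s < (1/2 : ℝ) then 0 else η s)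
    (ψ ψstar : ℝ → EuclideanSpace ℝ (Fin N) → ℝ → ℝ)
    (hψ : ∀ R x t, ψ R x t
      = η (R⁻¹ * (1 + ‖x‖ ^ 2 + ∫ σ in (0:ℝ)..t, Φ σ)) ^ (2 * p'))
    (hψstar : ∀ R x t, ψstar R x t
      = ηstar (R⁻¹ * (1 + ‖x‖ ^ 2 + ∫ σ in (0:ℝ)..t, Φ σ)) ^ (2 * p')) :
    ∃ C₂ > (0 : ℝ),
      ∀ R > (0 : ℝ), ∀ x : EuclideanSpace ℝ (Fin N), ∀ t ≥ (0 : ℝ),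
        1 + ‖x‖ ^ 2 + (∫ σ in (0:ℝ)..t, Φ σ) ≤ R →
        |∑ i : Fin N,
            fderiv ℝ (fun y => fderiv ℝ (fun z => ψ R z t) y
              (EuclideanSpace.single i (1:ℝ))) x (EuclideanSpace.single i (1:ℝ))| ≤
          C₂ * R⁻¹ * (ψstar R x t) ^ (1 / p) := by
  have hp0 : (0:ℝ) < p - 1 := by linarith
  have hp'1 : 1 < p' := by rw [hp', lt_div_iff₀ hp0]; linarith
  have h2p' : (1:ℝ) ≤ 2 * p' := by linarith
  have h2p'1 : (1:ℝ) ≤ 2 * p' - 1 := by linarith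
  have h2 : ContDiff ℝ ((1:ℕ) + 1) η := by exact_mod_cast hη
  have hη1d : ContDiff ℝ 1 (deriv η) := (contDiff_succ_iff_deriv.mp h2).2.2
  have hcont1 : Continuous (deriv η) := hη1d.continuous
  have hcont2 : Continuous (deriv (deriv η)) := (contDiff_one_iff_deriv.mp hη1d).2
  obtain ⟨M1, hM1⟩ := (isCompact_Icc (a := (0:ℝ)) (b := 1)).exists_bound_of_continuousOn
    hcont1.continuousOn
  obtain ⟨M2, hM2⟩ := (isCompact_Icc (a := (0:ℝ)) (b := 1)).exists_bound_of_continuousOn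
    hcont2.continuousOn
  have hM1' : ∀ u ∈ Set.Icc (0:ℝ) 1, |deriv η u| ≤ M1 := by
    simpa [Real.norm_eq_abs] using hM1
  have hM2' : ∀ u ∈ Set.Icc (0:ℝ) 1, |deriv (deriv η) u| ≤ M2 := by
    simpa [Real.norm_eq_abs] using hM2
  have hM1n : 0 ≤ M1 := le_trans (abs_nonneg _) (hM1' 0 (by norm_num))
  have hM2n : 0 ≤ M2 := le_trans (abs_nonneg _) (hM2' 0 (by norm_num))
  refine ⟨1 + 2*(N:ℝ)*(2*p'*M1) + 4*(2*p'*M2 + 2*p'*(2*p'-1)*M1^2), ?_, ?_⟩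
  · have hNn : (0:ℝ) ≤ (N:ℝ) := Nat.cast_nonneg N
    have u1 : (0:ℝ) ≤ 2*(N:ℝ)*(2*p'*M1) :=
      mul_nonneg (by linarith) (mul_nonneg (by linarith) hM1n)
    have u2 : (0:ℝ) ≤ 2*p'*M2 := mul_nonneg (by linarith) hM2n
    have u3 : (0:ℝ) ≤ 2*p'*(2*p'-1)*M1^2 :=
      mul_nonneg (mul_nonneg (by linarith) (by linarith)) (sq_nonneg M1)
    linarith
  intro R hR x t ht hle
  simp only [hψ]
  rw [hψstar]
  set c := ∫ σ in (0:ℝ)..t, Φ σ with hcdef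
  have hc : 0 ≤ c := by
    apply intervalIntegral.integral_nonneg ht
    intro σ _
    rw [hΦ]
    exact MeasureTheory.integral_nonneg fun s => (Real.exp_pos _).le
  have hxn : (0:ℝ) ≤ ‖x‖^2 := sq_nonneg _
  have hs0 : 0 ≤ R⁻¹ * (1 + ‖x‖ ^ 2 + c) :=
    mul_nonneg (inv_nonneg.2 hR.le) (by linarith)
  have hs1 : R⁻¹ * (1 + ‖x‖ ^ 2 + c) ≤ 1 := by
    have h := mul_le_mul_of_nonneg_left hle (inv_nonneg.2 hR.le)
    rwa [inv_mul_cancel₀ (ne_of_gt hR)] at h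
  have hxR : ‖x‖^2 ≤ R := by linarith
  have hx2 : ∑ i : Fin N, (x i)^2 = ‖x‖^2 := by
    rw [EuclideanSpace.norm_eq, Real.sq_sqrt (by positivity)]
    simp [Real.norm_eq_abs, sq_abs]
  have hLHS : (∑ i : Fin N,
        fderiv ℝ (fun y => fderiv ℝ
          (fun z : EuclideanSpace ℝ (Fin N) => η (R⁻¹ * (1 + ‖z‖ ^ 2 + c)) ^ (2 * p')) y
          (EuclideanSpace.single i (1:ℝ))) x (EuclideanSpace.single i (1:ℝ)))
      = 2 * R⁻¹ * (deriv η (R⁻¹ * (1 + ‖x‖ ^ 2 + c)) * (2*p') *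
            η (R⁻¹ * (1 + ‖x‖ ^ 2 + c)) ^ (2*p'-1)) * (N:ℝ)
        + 4 * R⁻¹ * R⁻¹ * ‖x‖^2 *
          (deriv (deriv η) (R⁻¹ * (1 + ‖x‖ ^ 2 + c)) * (2*p') *
              η (R⁻¹ * (1 + ‖x‖ ^ 2 + c)) ^ (2*p'-1)
            + deriv η (R⁻¹ * (1 + ‖x‖ ^ 2 + c)) * (2*p') *
              (deriv η (R⁻¹ * (1 + ‖x‖ ^ 2 + c)) * (2*p'-1) *
                η (R⁻¹ * (1 + ‖x‖ ^ 2 + c)) ^ (2*p'-1-1))) := by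
    rw [Finset.sum_congr rfl (fun i _ => aux_sd N η hη (2*p') h2p' h2p'1 R c x i),
      Finset.sum_add_distrib, Finset.sum_const, Finset.card_univ, Fintype.card_fin,
      ← Finset.sum_mul, ← Finset.mul_sum, hx2, nsmul_eq_mul]
    ring
  rw [hLHS]
  exact aux_bound p p' M1 M2 R (N:ℝ) (‖x‖^2) η ηstar hp hp' hη01 hη1 hηstar
    (R⁻¹ * (1 + ‖x‖ ^ 2 + c)) (hM1' _ ⟨hs0, hs1⟩) (hM2' _ ⟨hs0, hs1⟩) hM1n hM2n
    hR (Nat.cast_nonneg N) hxn hxR
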